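/- Consider the sequence of complete graphs K_n. If t = t(n) satisfies t(n)/√n → ∞, then the probability that a uniformly random configuration of t(n) pebbles on K_n is solvable tends to 1 as n → ∞; if t(n) ≥ 1 and t(n)/√n → 0, then this probability tends to 0 as n → ∞. In other words, the pebbling threshold of the sequence of cliques is Θ(√N), where N = n is the number of vertices. -/

import Mathlib

open scoped Classical

/-- A single pebbling move on a graph `G`: remove two pebbles from a vertex `u`
(which must carry at least two pebbles) and place one pebble on a neighbor `v`. -/
def PebblingMove {V : Type*} (G : SimpleGraph V) (C C' : V → ℕ) : Prop :=
  ∃ u v, G.Adj u v ∧ 2 ≤ C u ∧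
    C' = fun w => if w = u then C u - 2 else if w = v then C v + 1 else C w

/-- A configuration is solvable if, for every root `r`, some finite sequence of
pebbling moves produces a configuration with at least one pebble on `r`. -/
def PebblingSolvable {V : Type*} (G : SimpleGraph V) (C : V → ℕ) : Prop :=
  ∀ r : V, ∃ C', Relation.ReflTransGen (PebblingMove G) C C' ∧ 1 ≤ C' r

/-- The finite set of all configurations of `t` pebbles on the vertex set `V`. -/
def pebbleConfigs (V : Type*) [Fintype V] [DecidableEq V] (t : ℕ) : Finset (V → ℕ) :=
  (Fintype.piFinset fun _ : V => Finset.range (t + 1)).filter fun C => ∑ v, C v = t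

/-- The probability that a uniformly random configuration of `t` pebbles on the
vertices of `G` is solvable. -/
noncomputable def solvProb {V : Type*} [Fintype V] [DecidableEq V]
    (G : SimpleGraph V) (t : ℕ) : ℝ :=
  (((pebbleConfigs V t).filter fun C => PebblingSolvable G C).card : ℝ) /
    ((pebbleConfigs V t).card : ℝ)


open Finset Filter

lemma solvable_top_iff (n : ℕ) (C : Fin n → ℕ) :
    PebblingSolvable (⊤ : SimpleGraph (Fin n)) C ↔ (∃ v, 2 ≤ C v) ∨ (∀ v, 1 ≤ C v) := by
  constructor
  · intro h
    by_contra hc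
    push_neg at hc
    obtain ⟨h2, r, hr⟩ := hc
    obtain ⟨C', hsteps, hC'⟩ := h r
    have hCC : C' = C := by
      rcases (Relation.ReflTransGen.cases_head hsteps) with h' | ⟨b, hb, _⟩
      · exact h'.symm
      · obtain ⟨u, v, _, hu, _⟩ := hb
        have := h2 u; omega
    rw [hCC] at hC'
    omega
  · rintro (⟨v, hv⟩ | hall) r
    · by_cases hrv : r = v
      · exact ⟨C, Relation.ReflTransGen.refl, by subst hrv; omega⟩
      · refine ⟨_, Relation.ReflTransGen.single ⟨v, r, ?_, hv, rfl⟩, ?_⟩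
        · exact fun h => hrv (h ▸ rfl)
        · simp [hrv]
    · exact ⟨C, Relation.ReflTransGen.refl, hall r⟩

lemma mem_pebbleConfigs {V : Type*} [Fintype V] [DecidableEq V] {t : ℕ} {C : V → ℕ} :
    C ∈ pebbleConfigs V t ↔ ∑ v, C v = t := by
  simp only [pebbleConfigs, Finset.mem_filter, Fintype.mem_piFinset, Finset.mem_range]
  refine ⟨fun h => h.2, fun h => ⟨fun v => ?_, h⟩⟩
  have : C v ≤ ∑ w, C w := Finset.single_le_sum (fun w _ => Nat.zero_le _) (Finset.mem_univ v)
  omega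

lemma count_sum_nsmul {n : ℕ} (C : Fin n → ℕ) (v : Fin n) :
    Multiset.count v (∑ w, C w • ({w} : Multiset (Fin n))) = C v := by
  rw [Multiset.count_sum']
  simp [Multiset.count_nsmul, Multiset.count_singleton]

lemma card_finsum {ι α : Type*} (s : Finset ι) (f : ι → Multiset α) :
    Multiset.card (∑ i ∈ s, f i) = ∑ i ∈ s, Multiset.card (f i) := by
  induction s using Finset.cons_induction with
  | empty => simp
  | cons a s ha ih => simp [Finset.sum_cons, ih]

lemma card_pebbleConfigs (n t : ℕ) :
    (pebbleConfigs (Fin n) t).card = (n + t - 1).choose t := by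
  have h := Sym.card_sym_eq_choose (α := Fin n) t
  rw [Fintype.card_fin] at h
  rw [← h, ← Finset.card_univ]
  refine Finset.card_bij' (fun C _ => ⟨∑ v, C v • ({v} : Multiset (Fin n)), ?_⟩)
    (fun (m : Sym (Fin n) t) _ => fun v => Multiset.count v (m : Multiset (Fin n)))
    ?_ ?_ ?_ ?_
  · rename_i hC
    rw [mem_pebbleConfigs] at hC
    rw [card_finsum]
    simpa using hC
  · intro a ha
    exact Finset.mem_univ _
  · intro m _
    rw [mem_pebbleConfigs]
    exact (Multiset.sum_count_eq_card (fun a _ => Finset.mem_univ a)).trans m.2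
  · intro C hC
    funext v
    exact count_sum_nsmul C v
  · intro m _
    apply Subtype.ext
    apply Multiset.ext.2
    intro v
    exact count_sum_nsmul _ v

lemma card_unsolv (n t : ℕ) :
    ((pebbleConfigs (Fin n) t).filter fun C => ¬ PebblingSolvable (⊤ : SimpleGraph (Fin n)) C).card
      = n.choose t - (if t = n then 1 else 0) := by
  have key : ((pebbleConfigs (Fin n) t).filter
        fun C => ¬ PebblingSolvable (⊤ : SimpleGraph (Fin n)) C).card
      = ((Finset.univ.powersetCard t).filter fun s => s ≠ (Finset.univ : Finset (Fin n))).card := by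
    refine Finset.card_bij' (fun C _ => Finset.univ.filter fun v => C v = 1)
      (fun s _ => fun v => if v ∈ s then 1 else 0) ?_ ?_ ?_ ?_
    · intro C hC
      rw [Finset.mem_filter, mem_pebbleConfigs] at hC
      obtain ⟨hsum, hns⟩ := hC
      rw [solvable_top_iff] at hns
      push_neg at hns
      obtain ⟨h2, v0, hv0⟩ := hns
      rw [Finset.mem_filter, Finset.mem_powersetCard_univ]
      constructor
      · rw [Finset.card_filter]
        rw [← hsum]
        exact Finset.sum_congr rfl fun v _ => by have := h2 v; split <;> omega
      · intro he
        have hv := Finset.eq_univ_iff_forall.1 he v0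
        simp only [Finset.mem_filter] at hv
        omega
    · intro s hs
      rw [Finset.mem_filter, Finset.mem_powersetCard_univ] at hs
      rw [Finset.mem_filter, mem_pebbleConfigs]
      refine ⟨by simp [hs.1], ?_⟩
      rw [solvable_top_iff]
      push_neg
      refine ⟨fun v => by split <;> omega, ?_⟩
      obtain ⟨v0, hv0⟩ : ∃ v, v ∉ s := by
        by_contra hc
        push_neg at hc
        exact hs.2 (Finset.eq_univ_iff_forall.2 hc)
      exact ⟨v0, by simp [hv0]⟩
    · intro C hC
      rw [Finset.mem_filter, mem_pebbleConfigs] at hC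
      obtain ⟨hsum, hns⟩ := hC
      rw [solvable_top_iff] at hns
      push_neg at hns
      obtain ⟨h2, -⟩ := hns
      funext v
      have := h2 v
      by_cases h : C v = 1 <;> simp [h] <;> omega
    · intro s hs
      ext v
      simp
  rw [key]
  by_cases ht : t = n
  · subst ht
    have hcard : (Finset.univ : Finset (Fin t)).card = t := by simp
    have huniv : (Finset.univ : Finset (Fin t)).powersetCard t
        = ({Finset.univ} : Finset (Finset (Fin t))) := by
      have h := Finset.powersetCard_self (Finset.univ : Finset (Fin t))
      rw [hcard] at h
      exact h
    rw [huniv, Finset.filter_singleton, if_neg (by simp)]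
    simp
  · have : ((Finset.univ : Finset (Fin n)).powersetCard t).filter
        (fun s => s ≠ Finset.univ) = Finset.univ.powersetCard t := by
      apply Finset.filter_true_of_mem
      intro s hs
      rw [Finset.mem_powersetCard_univ] at hs
      intro he
      apply ht
      rw [← hs, he, Finset.card_univ, Fintype.card_fin]
    rw [this, Finset.card_powersetCard, Finset.card_univ, Fintype.card_fin, if_neg ht,
      Nat.sub_zero]

lemma one_add_sum_le_prod {ι : Type*} (s : Finset ι) (f : ι → ℝ)
    (hf : ∀ i ∈ s, 0 ≤ f i) : 1 + ∑ i ∈ s, f i ≤ ∏ i ∈ s, (1 + f i) := by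
  induction s using Finset.cons_induction with
  | empty => simp
  | cons a s ha ih =>
    rw [Finset.sum_cons, Finset.prod_cons]
    have h1 := hf a (Finset.mem_cons_self a s)
    have h2 : ∀ i ∈ s, 0 ≤ f i := fun i hi => hf i (Finset.mem_cons.2 (Or.inr hi))
    have h3 := ih h2
    have h4 : 0 ≤ ∑ i ∈ s, f i := Finset.sum_nonneg h2
    nlinarith

lemma one_sub_sum_le_prod {ι : Type*} (s : Finset ι) (f : ι → ℝ)
    (hf : ∀ i ∈ s, 0 ≤ f i) (hf1 : ∀ i ∈ s, f i ≤ 1) :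
    1 - ∑ i ∈ s, f i ≤ ∏ i ∈ s, (1 - f i) := by
  induction s using Finset.cons_induction with
  | empty => simp
  | cons a s ha ih =>
    rw [Finset.sum_cons, Finset.prod_cons]
    have h1 := hf a (Finset.mem_cons_self a s)
    have h1' := hf1 a (Finset.mem_cons_self a s)
    have h2 : ∀ i ∈ s, 0 ≤ f i := fun i hi => hf i (Finset.mem_cons.2 (Or.inr hi))
    have h2' : ∀ i ∈ s, f i ≤ 1 := fun i hi => hf1 i (Finset.mem_cons.2 (Or.inr hi))
    have h3 := ih h2 h2'
    have h4 : 0 ≤ ∑ i ∈ s, f i := Finset.sum_nonneg h2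
    nlinarith

lemma choose_prod_identity (n t : ℕ) :
    n.choose t * ∏ i ∈ range t, (n + i) = (n + t - 1).choose t * ∏ i ∈ range t, (n - i) := by
  have h1 : n.descFactorial t = ∏ i ∈ range t, (n - i) := Nat.descFactorial_eq_prod_range n t
  have h2 : (n + t - 1).descFactorial t = ∏ i ∈ range t, (n + i) := by
    rw [Nat.descFactorial_eq_prod_range]
    rw [← Finset.prod_range_reflect (fun i => n + t - 1 - i) t]
    exact Finset.prod_congr rfl fun i hi => by
      rw [Finset.mem_range] at hi; omega
  apply Nat.eq_of_mul_eq_mul_left (Nat.factorial_pos t)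
  calc t.factorial * (n.choose t * ∏ i ∈ range t, (n + i))
      = (t.factorial * n.choose t) * ∏ i ∈ range t, (n + i) := by ring
    _ = n.descFactorial t * (n + t - 1).descFactorial t := by
        rw [h2, ← Nat.descFactorial_eq_factorial_mul_choose]
    _ = (∏ i ∈ range t, (n - i)) * (t.factorial * (n + t - 1).choose t) := by
        rw [h1, ← Nat.descFactorial_eq_factorial_mul_choose]; try ring
    _ = t.factorial * ((n + t - 1).choose t * ∏ i ∈ range t, (n - i)) := by ring

lemma ratio_eq (n t : ℕ) (hn : 1 ≤ n) (ht : t ≤ n) :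
    (n.choose t : ℝ) / ((n + t - 1).choose t : ℝ)
      = (∏ i ∈ range t, ((n : ℝ) - i)) / (∏ i ∈ range t, ((n : ℝ) + i)) := by
  have hT : 0 < (n + t - 1).choose t := Nat.choose_pos (by omega)
  have hB : (0:ℝ) < ∏ i ∈ range t, ((n : ℝ) + i) :=
    Finset.prod_pos fun i _ => by positivity
  rw [div_eq_div_iff (by exact_mod_cast hT.ne') hB.ne']
  have := choose_prod_identity n t
  have hcast : ((n.choose t * ∏ i ∈ range t, (n + i) : ℕ) : ℝ)
      = (((n + t - 1).choose t * ∏ i ∈ range t, (n - i) : ℕ) : ℝ) := by exact_mod_cast this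
  push_cast at hcast
  have hprod : ∏ i ∈ range t, ((n - i : ℕ) : ℝ) = ∏ i ∈ range t, ((n:ℝ) - i) :=
    Finset.prod_congr rfl fun i hi => by
      rw [Finset.mem_range] at hi
      rw [Nat.cast_sub (by omega : i ≤ n)]
  rw [hprod] at hcast
  linarith [hcast]


lemma ratio_upper (n t : ℕ) (hn : 1 ≤ n) (ht : t ≤ n) :
    (n.choose t : ℝ) / ((n + t - 1).choose t : ℝ)
      ≤ 1 / (1 + (∑ i ∈ range t, (i : ℝ)) / n) := by
  have hn' : (0:ℝ) < n := by exact_mod_cast hn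
  have hs : (0:ℝ) ≤ (∑ i ∈ range t, (i : ℝ)) / n :=
    div_nonneg (Finset.sum_nonneg fun i _ => Nat.cast_nonneg i) hn'.le
  have hB : (0:ℝ) < ∏ i ∈ range t, ((n : ℝ) + i) :=
    Finset.prod_pos fun i _ => by positivity
  have hA0 : (0:ℝ) ≤ ∏ i ∈ range t, ((n : ℝ) - i) := by
    apply Finset.prod_nonneg
    intro i hi
    rw [Finset.mem_range] at hi
    have : (i:ℝ) ≤ n := by exact_mod_cast (by omega : i ≤ n)
    linarith
  have hA : ∏ i ∈ range t, ((n : ℝ) - i) ≤ (n:ℝ)^t := by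
    calc ∏ i ∈ range t, ((n : ℝ) - i) ≤ ∏ i ∈ range t, (n:ℝ) := by
          apply Finset.prod_le_prod
          · intro i hi
            rw [Finset.mem_range] at hi
            have : (i:ℝ) ≤ n := by exact_mod_cast (by omega : i ≤ n)
            linarith
          · intro i _
            have : (0:ℝ) ≤ i := Nat.cast_nonneg i
            linarith
      _ = (n:ℝ)^t := by rw [Finset.prod_const, Finset.card_range]
  have hBlow : (n:ℝ)^t * (1 + (∑ i ∈ range t, (i : ℝ)) / n)
      ≤ ∏ i ∈ range t, ((n : ℝ) + i) := by
    have hfac : (n:ℝ)^t * ∏ i ∈ range t, (1 + (i:ℝ)/n) = ∏ i ∈ range t, ((n : ℝ) + i) := by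
      rw [show ((n:ℝ)^t) = ∏ _i ∈ range t, (n:ℝ) by
        rw [Finset.prod_const, Finset.card_range], ← Finset.prod_mul_distrib]
      exact Finset.prod_congr rfl fun i _ => by field_simp
    rw [← hfac]
    apply mul_le_mul_of_nonneg_left _ (by positivity : (0:ℝ) ≤ (n:ℝ)^t)
    rw [Finset.sum_div]
    exact one_add_sum_le_prod _ _ fun i _ => by positivity
  rw [ratio_eq n t hn ht, div_le_div_iff₀ hB (by linarith)]
  have hnt : (0:ℝ) < (n:ℝ)^t := by positivity
  nlinarith [mul_le_mul_of_nonneg_right hA (by linarith : (0:ℝ) ≤ 1 + (∑ i ∈ range t, (i : ℝ)) / n)]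

lemma ratio_lower (n t : ℕ) (hn : 1 ≤ n) (ht : 2 * t ≤ n) :
    1 - (∑ i ∈ range t, 2 * (i : ℝ)) / n
      ≤ (n.choose t : ℝ) / ((n + t - 1).choose t : ℝ) := by
  have hn' : (0:ℝ) < n := by exact_mod_cast hn
  rw [ratio_eq n t hn (by omega), ← Finset.prod_div_distrib]
  have hstep : ∀ i ∈ range t, 1 - 2 * (i:ℝ)/n ≤ ((n:ℝ) - i) / ((n:ℝ) + i) := by
    intro i hi
    rw [Finset.mem_range] at hi
    have hi' : (0:ℝ) ≤ i := Nat.cast_nonneg i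
    rw [le_div_iff₀ (by linarith : (0:ℝ) < (n:ℝ) + i)]
    have h1 : 2 * (i:ℝ) / n * ((n:ℝ) + i) = 2*i + 2*(i:ℝ)^2/n := by field_simp
    nlinarith [div_nonneg (by positivity : (0:ℝ) ≤ 2*(i:ℝ)^2) hn'.le, h1]
  calc 1 - (∑ i ∈ range t, 2 * (i : ℝ)) / n
      ≤ ∏ i ∈ range t, (1 - 2 * (i:ℝ)/n) := by
        rw [Finset.sum_div]
        apply one_sub_sum_le_prod
        · intro i _; positivity
        · intro i hi
          rw [Finset.mem_range] at hi
          rw [div_le_one hn']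
          have : (2:ℝ) * i ≤ 2 * t - 2 := by
            have : (i:ℝ) ≤ (t:ℝ) - 1 := by
              have : (i:ℝ) + 1 ≤ t := by exact_mod_cast hi
              linarith
            linarith
          have hnt : (2:ℝ) * t ≤ n := by exact_mod_cast ht
          linarith
    _ ≤ ∏ i ∈ range t, ((n:ℝ) - i) / ((n:ℝ) + i) := by
        apply Finset.prod_le_prod
        · intro i hi
          have := hstep i hi
          rw [Finset.mem_range] at hi
          have hi' : (0:ℝ) ≤ i := Nat.cast_nonneg i
          have : (2:ℝ) * i ≤ n := by
            have hnt : (2:ℝ) * t ≤ n := by exact_mod_cast ht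
            have : (i:ℝ) ≤ t := by exact_mod_cast hi.le
            linarith
          rw [sub_nonneg, div_le_one hn']
          linarith [this]
        · exact hstep

lemma solvProb_formula (n t : ℕ) (hn : 1 ≤ n) :
    solvProb (⊤ : SimpleGraph (Fin n)) t
      = 1 - ((n.choose t : ℝ) - (if t = n then 1 else 0)) / (((n + t - 1).choose t : ℕ) : ℝ) := by
  have hT : 0 < (n + t - 1).choose t := Nat.choose_pos (by omega)
  have hT' : (0:ℝ) < (((n + t - 1).choose t : ℕ) : ℝ) := by exact_mod_cast hT
  have hsplit := Finset.card_filter_add_card_filter_not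
    (s := pebbleConfigs (Fin n) t) (p := fun C => PebblingSolvable (⊤ : SimpleGraph (Fin n)) C)
  rw [card_unsolv, card_pebbleConfigs] at hsplit
  have hδle : (if t = n then 1 else 0) ≤ n.choose t := by
    split
    · rename_i h; subst h; simp
    · exact Nat.zero_le _
  have hut : n.choose t - (if t = n then 1 else 0) ≤ (n + t - 1).choose t := by omega
  have hS : (((pebbleConfigs (Fin n) t).filter
      fun C => PebblingSolvable (⊤ : SimpleGraph (Fin n)) C).card : ℝ)
      = ((n + t - 1).choose t : ℝ) - (((n.choose t : ℕ) : ℝ) - (if t = n then (1:ℝ) else 0)) := by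
    have : ((pebbleConfigs (Fin n) t).filter
        fun C => PebblingSolvable (⊤ : SimpleGraph (Fin n)) C).card
        = (n + t - 1).choose t - (n.choose t - (if t = n then 1 else 0)) := by omega
    rw [this, Nat.cast_sub hut, Nat.cast_sub hδle]
    split <;> simp
  unfold solvProb
  rw [card_pebbleConfigs, hS]
  field_simp


lemma solvProb_nonneg (n t : ℕ) : 0 ≤ solvProb (⊤ : SimpleGraph (Fin n)) t :=
  div_nonneg (Nat.cast_nonneg _) (Nat.cast_nonneg _)

lemma solvProb_le_one (n t : ℕ) : solvProb (⊤ : SimpleGraph (Fin n)) t ≤ 1 := by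
  apply div_le_one_of_le₀
  · exact_mod_cast Finset.card_filter_le _ _
  · exact Nat.cast_nonneg _

lemma sum_range_id_real (t : ℕ) : (∑ i ∈ range t, (i:ℝ)) * 2 = (t:ℝ) * (t:ℝ) - t := by
  have h := Finset.sum_range_id_mul_two t
  have : ((∑ i ∈ range t, i : ℕ) : ℝ) * 2 = ((t * (t-1) : ℕ) : ℝ) := by exact_mod_cast h
  rw [Nat.cast_sum] at this
  rcases Nat.eq_zero_or_pos t with h0 | h1
  · subst h0; simp
  · rw [Nat.cast_mul, Nat.cast_sub h1] at this
    push_cast at this ⊢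
    linarith


theorem main_part1 (t : ℕ → ℕ)
    (h : Filter.Tendsto (fun n => (t n : ℝ) / Real.sqrt n) Filter.atTop Filter.atTop) :
    Filter.Tendsto (fun n => solvProb (⊤ : SimpleGraph (Fin n)) (t n)) Filter.atTop (nhds 1) := by
  have hsq : Tendsto (fun n => ((t n : ℝ))^2 / n) atTop atTop := by
    apply (h.atTop_mul_atTop₀ h).congr'
    filter_upwards [eventually_ge_atTop 1] with n hn
    have hn' : (0:ℝ) < n := by exact_mod_cast hn
    rw [div_mul_div_comm, Real.mul_self_sqrt hn'.le, ← sq]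
  have ht2 : ∀ᶠ n in atTop, 2 ≤ t n := by
    filter_upwards [h.eventually_ge_atTop 2, eventually_ge_atTop 1] with n hn hn1
    have hs1 : (1:ℝ) ≤ Real.sqrt n := by
      rw [show (1:ℝ) = Real.sqrt 1 by simp]
      exact Real.sqrt_le_sqrt (by exact_mod_cast hn1)
    have hs0 : (0:ℝ) < Real.sqrt n := by linarith
    have : (2:ℝ) ≤ (t n : ℝ) / Real.sqrt n := hn
    have : (2:ℝ) ≤ (t n : ℝ) := by
      calc (2:ℝ) ≤ 2 * Real.sqrt n := by nlinarith
        _ ≤ t n := by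
            rw [le_div_iff₀ hs0] at hn
            linarith
    exact_mod_cast this
  have hbig : Tendsto (fun n => 1 + (t n:ℝ)^2/(4*(n:ℝ))) atTop atTop := by
    apply tendsto_atTop_add_const_left
    have h4 : Tendsto (fun n => ((t n:ℝ)^2/(n:ℝ))/4) atTop atTop :=
      hsq.atTop_div_const (by norm_num)
    exact h4.congr fun n => by rw [div_div, mul_comm]
  have hb0 : Tendsto (fun n => (1 + (t n:ℝ)^2/(4*(n:ℝ)))⁻¹) atTop (nhds 0) :=
    hbig.inv_tendsto_atTop
  apply tendsto_of_tendsto_of_tendsto_of_le_of_le'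
    (g := fun n => 1 - (1 + (t n:ℝ)^2/(4*(n:ℝ)))⁻¹) (h := fun _ => (1:ℝ))
  · simpa using tendsto_const_nhds.sub hb0
  · exact tendsto_const_nhds
  · filter_upwards [ht2, eventually_ge_atTop 1] with n h2 h1
    rw [solvProb_formula n (t n) h1]
    have hn' : (0:ℝ) < n := by exact_mod_cast h1
    have htR : (2:ℝ) ≤ t n := by exact_mod_cast h2
    have hbpos : (0:ℝ) < 1 + (t n:ℝ)^2/(4*(n:ℝ)) := by positivity
    have hTpos : (0:ℝ) < (((n + t n - 1).choose (t n) : ℕ) : ℝ) := by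
      exact_mod_cast Nat.choose_pos (by omega : t n ≤ n + t n - 1)
    suffices hsuf : ((n.choose (t n):ℝ) - (if t n = n then 1 else 0))
        / (((n + t n - 1).choose (t n) : ℕ) : ℝ) ≤ (1 + (t n:ℝ)^2/(4*(n:ℝ)))⁻¹ by
      linarith
    by_cases hle : t n ≤ n
    · have hup := ratio_upper n (t n) h1 hle
      have hδ : (0:ℝ) ≤ (if t n = n then (1:ℝ) else 0) := by split <;> norm_num
      have step1 : ((n.choose (t n):ℝ) - (if t n = n then 1 else 0))
          / (((n + t n - 1).choose (t n) : ℕ) : ℝ)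
          ≤ (n.choose (t n):ℝ) / (((n + t n - 1).choose (t n) : ℕ) : ℝ) := by
        gcongr
        linarith
      have hsum := sum_range_id_real (t n)
      have hs4 : (t n:ℝ)^2/(4*(n:ℝ)) ≤ (∑ i ∈ range (t n), (i:ℝ))/(n:ℝ) := by
        rw [show (t n:ℝ)^2/(4*(n:ℝ)) = ((t n:ℝ)^2/4)/(n:ℝ) by rw [div_div]]
        gcongr
        nlinarith
      have step2 : 1/(1 + (∑ i ∈ range (t n), (i:ℝ))/(n:ℝ))
          ≤ (1 + (t n:ℝ)^2/(4*(n:ℝ)))⁻¹ := by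
        rw [← one_div]
        apply one_div_le_one_div_of_le hbpos
        linarith
      linarith [hup, step1, step2]
    · push_neg at hle
      have hcn : n.choose (t n) = 0 := Nat.choose_eq_zero_of_lt hle
      have hδ0 : ¬ (t n = n) := by omega
      rw [hcn, if_neg hδ0]
      norm_num
      positivity
  · exact Filter.Eventually.of_forall fun n => solvProb_le_one n (t n)


theorem main_part2 (t : ℕ → ℕ) (ht1 : ∀ n, 1 ≤ t n)
    (h : Filter.Tendsto (fun n => (t n : ℝ) / Real.sqrt n) Filter.atTop (nhds 0)) :
    Filter.Tendsto (fun n => solvProb (⊤ : SimpleGraph (Fin n)) (t n)) Filter.atTop (nhds 0) := by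
  have hg : Tendsto (fun n => ((t n : ℝ) / Real.sqrt n)^2) atTop (nhds 0) := by
    simpa using h.pow 2
  apply tendsto_of_tendsto_of_tendsto_of_le_of_le' (g := fun _ => (0:ℝ))
    (h := fun n => ((t n : ℝ) / Real.sqrt n)^2) tendsto_const_nhds hg
  · exact Filter.Eventually.of_forall fun n => solvProb_nonneg n (t n)
  · have hev : ∀ᶠ n in atTop, (t n : ℝ) / Real.sqrt n ≤ 1/2 := by
      have := h.eventually (eventually_le_nhds (by norm_num : (0:ℝ) < 1/2))
      exact this
    filter_upwards [hev, eventually_ge_atTop 1] with n hle h1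
    have hn' : (0:ℝ) < n := by exact_mod_cast h1
    have hs0 : (0:ℝ) < Real.sqrt n := Real.sqrt_pos.2 hn'
    have hn1 : (1:ℝ) ≤ n := by exact_mod_cast h1
    have hsn : Real.sqrt n ≤ n := by
      nlinarith [Real.sq_sqrt hn'.le, Real.sqrt_nonneg (n:ℝ),
        sq_nonneg (Real.sqrt n - 1)]
    have h2t : (2:ℝ) * t n ≤ n := by
      rw [div_le_iff₀ hs0] at hle
      calc (2:ℝ) * t n ≤ Real.sqrt n := by linarith
        _ ≤ n := hsn
    have h2tn : 2 * t n ≤ n := by exact_mod_cast h2t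
    have htn : t n < n := by have := ht1 n; omega
    rw [solvProb_formula n (t n) h1, if_neg (by omega : ¬ t n = n)]
    have hlow := ratio_lower n (t n) h1 h2tn
    have hsum : ∑ i ∈ range (t n), 2 * (i:ℝ) = (t n:ℝ) * (t n:ℝ) - t n := by
      rw [← Finset.mul_sum]
      have := sum_range_id_real (t n)
      linarith
    have hsq : ((t n : ℝ) / Real.sqrt n)^2 = (t n:ℝ)^2 / n := by
      rw [div_pow, Real.sq_sqrt hn'.le]
    rw [hsq]
    have hkey : (∑ i ∈ range (t n), 2 * (i:ℝ)) / n ≤ (t n:ℝ)^2 / n := by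
      gcongr
      rw [hsum]
      nlinarith [(Nat.cast_nonneg (t n) : (0:ℝ) ≤ t n)]
    rw [sub_zero]
    linarith [hlow, hkey]


/-- The pebbling threshold of the sequence of cliques is `Θ(√N)`:
if `t(n)/√n → ∞` then a uniformly random configuration of `t(n)` pebbles on `K_n`
is solvable with probability tending to `1`, while if `t(n) ≥ 1` and `t(n)/√n → 0`
then this probability tends to `0`. -/
theorem pebbling_threshold_clique (t : ℕ → ℕ) :
    (Filter.Tendsto (fun n => (t n : ℝ) / Real.sqrt n) Filter.atTop Filter.atTop →
      Filter.Tendsto (fun n => solvProb (⊤ : SimpleGraph (Fin n)) (t n))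
        Filter.atTop (nhds 1)) ∧
    ((∀ n, 1 ≤ t n) →
      Filter.Tendsto (fun n => (t n : ℝ) / Real.sqrt n) Filter.atTop (nhds 0) →
      Filter.Tendsto (fun n => solvProb (⊤ : SimpleGraph (Fin n)) (t n))
        Filter.atTop (nhds 0)) :=
  ⟨main_part1 t, main_part2 t⟩
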